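/- Let (Ω, μ) be a finite measure space, N ∈ L²(μ), α_t > 0, and let α ≥ 0, β ≥ 0, D ≥ 0, b > 0, R₀ ≥ 1; for p ≥ 0 set s(p) = (b + p)/(b·R₀ + p) and S_f(p) = exp(−α·D·s(p) − β·D²·s(p)²). Then for all u, v ∈ L²(μ) with u ≥ 0 and v ≥ 0 a.e., |∫_Ω N(x)·S_f(u(x)/α_t) dμ − ∫_Ω N(x)·S_f(v(x)/α_t) dμ| ≤ (1/α_t)·(α·D + 2·β·D²)·((R₀ − 1)/(b·R₀²))·‖N‖_{L²(μ)}·‖u − v‖_{L²(μ)}; i.e., the exponent functional of the Tumor Control Probability is Lipschitz on the cone of nonnegative L² functions. -/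

import Mathlib

open MeasureTheory

private lemma exp_neg_lip {X Y : ℝ} (hX : 0 ≤ X) (hY : 0 ≤ Y) :
    |Real.exp (-X) - Real.exp (-Y)| ≤ |X - Y| := by
  wlog h : Y ≤ X generalizing X Y
  · rw [abs_sub_comm, abs_sub_comm X]
    exact this hY hX (le_of_not_ge h)
  have e1 : Real.exp (-Y) ≤ 1 := Real.exp_le_one_iff.mpr (by linarith)
  have e2 : (Y - X) + 1 ≤ Real.exp (Y - X) := Real.add_one_le_exp _
  have e3 : Real.exp (-Y) * Real.exp (Y - X) = Real.exp (-X) := by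
    rw [← Real.exp_add]; ring_nf
  have e4 : 0 < Real.exp (-Y) := Real.exp_pos _
  have e5 : Real.exp (-X) ≤ Real.exp (-Y) := Real.exp_le_exp.2 (by linarith)
  rw [abs_of_nonpos (by linarith), abs_of_nonneg (by linarith)]
  nlinarith [mul_le_mul_of_nonneg_left e2 e4.le]

private lemma s_lip {b R₀ : ℝ} (hb : 0 < b) (hR₀ : 1 ≤ R₀) {p q : ℝ}
    (hp : 0 ≤ p) (hq : 0 ≤ q) :
    |(b + p) / (b * R₀ + p) - (b + q) / (b * R₀ + q)| ≤
      (R₀ - 1) / (b * R₀ ^ 2) * |p - q| := by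
  have hdp : 0 < b * R₀ + p := by nlinarith
  have hdq : 0 < b * R₀ + q := by nlinarith
  rw [div_sub_div _ _ hdp.ne' hdq.ne', abs_div]
  have hnum : (b + p) * (b * R₀ + q) - (b * R₀ + p) * (b + q) = b * (R₀ - 1) * (p - q) := by
    ring
  rw [hnum, abs_mul, abs_of_nonneg (by nlinarith : (0:ℝ) ≤ b * (R₀ - 1)),
    abs_of_pos (mul_pos hdp hdq)]
  have hbR : 0 < b * R₀ := by nlinarith
  have hden : (b * R₀) ^ 2 ≤ (b * R₀ + p) * (b * R₀ + q) := by
    nlinarith [mul_nonneg hp hq, mul_nonneg hbR.le hp, mul_nonneg hbR.le hq]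
  have h1 : b * (R₀ - 1) * |p - q| / ((b * R₀ + p) * (b * R₀ + q)) ≤
      b * (R₀ - 1) * |p - q| / (b * R₀) ^ 2 :=
    div_le_div_of_nonneg_left
      (mul_nonneg (mul_nonneg hb.le (by linarith)) (abs_nonneg _))
      (by positivity) hden
  refine h1.trans (le_of_eq ?_)
  field_simp

private lemma Sf_lip {α β D b R₀ : ℝ} (hα : 0 ≤ α) (hβ : 0 ≤ β) (hD : 0 ≤ D)
    (hb : 0 < b) (hR₀ : 1 ≤ R₀) {p q : ℝ} (hp : 0 ≤ p) (hq : 0 ≤ q) :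
    |Real.exp (-(α * D * ((b + p) / (b * R₀ + p))) - β * D ^ 2 * ((b + p) / (b * R₀ + p)) ^ 2)
      - Real.exp (-(α * D * ((b + q) / (b * R₀ + q))) - β * D ^ 2 * ((b + q) / (b * R₀ + q)) ^ 2)|
      ≤ (α * D + 2 * β * D ^ 2) * ((R₀ - 1) / (b * R₀ ^ 2)) * |p - q| := by
  set sp := (b + p) / (b * R₀ + p) with hsp
  set sq := (b + q) / (b * R₀ + q) with hsq
  have hdp : 0 < b * R₀ + p := by nlinarith
  have hdq : 0 < b * R₀ + q := by nlinarith
  have hsp0 : 0 ≤ sp := div_nonneg (by linarith) hdp.le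
  have hsq0 : 0 ≤ sq := div_nonneg (by linarith) hdq.le
  have hsp1 : sp ≤ 1 := (div_le_one hdp).mpr (by nlinarith)
  have hsq1 : sq ≤ 1 := (div_le_one hdq).mpr (by nlinarith)
  set X := α * D * sp + β * D ^ 2 * sp ^ 2 with hX
  set Y := α * D * sq + β * D ^ 2 * sq ^ 2 with hY
  have hX0 : 0 ≤ X := by positivity
  have hY0 : 0 ≤ Y := by positivity
  have h1 : |Real.exp (-X) - Real.exp (-Y)| ≤ |X - Y| := exp_neg_lip hX0 hY0
  have e1 : -(α * D * sp) - β * D ^ 2 * sp ^ 2 = -X := by rw [hX]; ring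
  have e2 : -(α * D * sq) - β * D ^ 2 * sq ^ 2 = -Y := by rw [hY]; ring
  rw [e1, e2]
  have h2 : |X - Y| ≤ (α * D + 2 * β * D ^ 2) * |sp - sq| := by
    rw [show X - Y = (sp - sq) * (α * D + β * D ^ 2 * (sp + sq)) by rw [hX, hY]; ring,
      abs_mul, abs_of_nonneg (by positivity : (0:ℝ) ≤ α * D + β * D ^ 2 * (sp + sq)),
      mul_comm]
    refine mul_le_mul_of_nonneg_right ?_ (abs_nonneg _)
    have hβD : 0 ≤ β * D ^ 2 := by positivity
    nlinarith [mul_le_mul_of_nonneg_left (add_le_add hsp1 hsq1) hβD]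
  have h3 : |sp - sq| ≤ (R₀ - 1) / (b * R₀ ^ 2) * |p - q| := s_lip hb hR₀ hp hq
  calc |Real.exp (-X) - Real.exp (-Y)| ≤ |X - Y| := h1
    _ ≤ (α * D + 2 * β * D ^ 2) * |sp - sq| := h2
    _ ≤ (α * D + 2 * β * D ^ 2) * ((R₀ - 1) / (b * R₀ ^ 2) * |p - q|) :=
        mul_le_mul_of_nonneg_left h3 (by positivity)
    _ = (α * D + 2 * β * D ^ 2) * ((R₀ - 1) / (b * R₀ ^ 2)) * |p - q| := by ring

/-- The exponent functional of the Tumor Control Probability,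
`u ↦ ∫ N(x)·S_f(u(x)/α_t) dμ`, is Lipschitz on the cone of nonnegative `L²`
functions, with constant
`(1/α_t)·(α·D + 2·β·D²)·((R₀ − 1)/(b·R₀²))·‖N‖_{L²(μ)}`. -/
theorem TCP_exponent_lipschitz
    {Ω : Type*} [MeasurableSpace Ω] (μ : Measure Ω) [IsFiniteMeasure μ]
    (N : Ω → ℝ) (hN : MemLp N 2 μ) (αt : ℝ) (hαt : 0 < αt)
    (α β D b R₀ : ℝ) (hα : 0 ≤ α) (hβ : 0 ≤ β) (hD : 0 ≤ D)
    (hb : 0 < b) (hR₀ : 1 ≤ R₀) :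
    let s : ℝ → ℝ := fun p => (b + p) / (b * R₀ + p)
    let Sf : ℝ → ℝ := fun p => Real.exp (-(α * D * s p) - β * D ^ 2 * s p ^ 2)
    ∀ u v : Ω → ℝ, MemLp u 2 μ → MemLp v 2 μ →
      (0 ≤ᵐ[μ] u) → (0 ≤ᵐ[μ] v) →
      |(∫ x, N x * Sf (u x / αt) ∂μ) - ∫ x, N x * Sf (v x / αt) ∂μ| ≤
        (1 / αt) * (α * D + 2 * β * D ^ 2) * ((R₀ - 1) / (b * R₀ ^ 2)) *
          (eLpNorm N 2 μ).toReal * (eLpNorm (u - v) 2 μ).toReal := by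
  intro s Sf u v hu hv hu0 hv0
  set C : ℝ := (α * D + 2 * β * D ^ 2) * ((R₀ - 1) / (b * R₀ ^ 2)) with hC
  have hC0 : 0 ≤ C := by
    apply mul_nonneg (by positivity)
    apply div_nonneg (by linarith) (by positivity)
  -- measurability of Sf ∘ (· / αt)
  have hs_meas : Measurable s := by
    exact (measurable_const.add measurable_id).div (measurable_const.add measurable_id)
  have hSf_meas : Measurable Sf := by
    exact Real.measurable_exp.comp
      (((measurable_const.mul hs_meas).neg.sub
        (measurable_const.mul (hs_meas.pow_const 2))))
  have hmu : AEStronglyMeasurable (fun x => Sf (u x / αt)) μ :=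
    (hSf_meas.comp_aemeasurable (hu.1.aemeasurable.div_const αt)).aestronglyMeasurable
  have hmv : AEStronglyMeasurable (fun x => Sf (v x / αt)) μ :=
    (hSf_meas.comp_aemeasurable (hv.1.aemeasurable.div_const αt)).aestronglyMeasurable
  -- Sf values are in (0,1] on nonneg inputs
  have hSf_le_one : ∀ p : ℝ, 0 ≤ p → |Sf p| ≤ 1 := by
    intro p hp
    have hdp : 0 < b * R₀ + p := by nlinarith
    have hsp0 : 0 ≤ s p := by
      show (0:ℝ) ≤ (b + p) / (b * R₀ + p)
      exact div_nonneg (by linarith) hdp.le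
    show |Real.exp (-(α * D * s p) - β * D ^ 2 * s p ^ 2)| ≤ 1
    rw [abs_of_pos (Real.exp_pos _)]
    refine Real.exp_le_one_iff.mpr ?_
    nlinarith [mul_nonneg (mul_nonneg hα hD) hsp0,
      mul_nonneg (mul_nonneg hβ (pow_nonneg hD 2)) (sq_nonneg (s p))]
  -- integrability of the two integrands
  have hNint : Integrable N μ := hN.integrable one_le_two
  have hint : ∀ (w : Ω → ℝ), AEStronglyMeasurable (fun x => Sf (w x / αt)) μ →
      (0 ≤ᵐ[μ] w) → Integrable (fun x => N x * Sf (w x / αt)) μ := by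
    intro w hmw hw0
    refine Integrable.mono' hNint.abs (hN.1.mul hmw) ?_
    filter_upwards [hw0] with x hx
    rw [Real.norm_eq_abs, abs_mul]
    calc |N x| * |Sf (w x / αt)| ≤ |N x| * 1 :=
          mul_le_mul_of_nonneg_left (hSf_le_one _ (div_nonneg hx hαt.le)) (abs_nonneg _)
      _ = |N x| := mul_one _
  have hintu := hint u hmu hu0
  have hintv := hint v hmv hv0
  -- the L² machinery
  have hNabs : MemLp (fun x => |N x|) 2 μ := by
    simpa [Real.norm_eq_abs] using hN.norm
  have hw : MemLp (u - v) 2 μ := hu.sub hv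
  have hwabs : MemLp (fun x => |u x - v x|) 2 μ := by
    simpa [Real.norm_eq_abs, Pi.sub_apply] using hw.norm
  set f : Lp ℝ 2 μ := hNabs.toLp _ with hf
  set g : Lp ℝ 2 μ := hwabs.toLp _ with hg
  have hfg_ae : (fun x => (f : Ω → ℝ) x * (g : Ω → ℝ) x)
      =ᵐ[μ] fun x => |N x| * |u x - v x| := by
    filter_upwards [hNabs.coeFn_toLp, hwabs.coeFn_toLp] with x h1 h2
    rw [h1, h2]
  have hinner : Integrable (fun x => (f : Ω → ℝ) x * (g : Ω → ℝ) x) μ := by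
    have := L2.integrable_inner (𝕜 := ℝ) f g
    simpa [RCLike.inner_apply, starRingEnd_apply, mul_comm] using this
  have hprod_int : Integrable (fun x => |N x| * |u x - v x|) μ := hinner.congr hfg_ae
  -- Cauchy–Schwarz
  have hCS : ∫ x, |N x| * |u x - v x| ∂μ ≤
      (eLpNorm N 2 μ).toReal * (eLpNorm (u - v) 2 μ).toReal := by
    have h1 : ∫ x, |N x| * |u x - v x| ∂μ = inner (𝕜 := ℝ) f g := by
      rw [L2.inner_def]
      refine integral_congr_ae ?_
      filter_upwards [hfg_ae] with x hx
      simp [RCLike.inner_apply, starRingEnd_apply]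
      rw [mul_comm ((g : Ω → ℝ) x), hx]
    have h2 : inner (𝕜 := ℝ) f g ≤ ‖f‖ * ‖g‖ := real_inner_le_norm f g
    have h3 : ‖f‖ = (eLpNorm N 2 μ).toReal := by
      rw [hf, Lp.norm_toLp]
      congr 1
      simpa [Real.norm_eq_abs] using eLpNorm_norm (f := N) (p := (2 : ENNReal)) (μ := μ)
    have h4 : ‖g‖ = (eLpNorm (u - v) 2 μ).toReal := by
      rw [hg, Lp.norm_toLp]
      congr 1
      simpa [Real.norm_eq_abs, Pi.sub_apply] using
        eLpNorm_norm (f := u - v) (p := (2 : ENNReal)) (μ := μ)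
    rw [h1, ← h3, ← h4]; exact h2
  -- pointwise a.e. bound
  have hptwise : ∀ᵐ x ∂μ, ‖N x * Sf (u x / αt) - N x * Sf (v x / αt)‖ ≤
      (C / αt) * (|N x| * |u x - v x|) := by
    filter_upwards [hu0, hv0] with x hux hvx
    rw [Real.norm_eq_abs, ← mul_sub, abs_mul]
    have hkey : |Sf (u x / αt) - Sf (v x / αt)| ≤ C * |u x / αt - v x / αt| :=
      Sf_lip hα hβ hD hb hR₀ (div_nonneg hux hαt.le) (div_nonneg hvx hαt.le)
    have hdiv : |u x / αt - v x / αt| = |u x - v x| / αt := by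
      rw [div_sub_div_same, abs_div, abs_of_pos hαt]
    calc |N x| * |Sf (u x / αt) - Sf (v x / αt)|
        ≤ |N x| * (C * (|u x - v x| / αt)) := by
          refine mul_le_mul_of_nonneg_left ?_ (abs_nonneg _)
          rw [← hdiv]; exact hkey
      _ = (C / αt) * (|N x| * |u x - v x|) := by ring
  -- put it together
  have hmain : |(∫ x, N x * Sf (u x / αt) ∂μ) - ∫ x, N x * Sf (v x / αt) ∂μ| ≤
      ∫ x, (C / αt) * (|N x| * |u x - v x|) ∂μ := by
    rw [← integral_sub hintu hintv, ← Real.norm_eq_abs]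
    exact norm_integral_le_of_norm_le (hprod_int.const_mul _) hptwise
  have hconst : ∫ x, (C / αt) * (|N x| * |u x - v x|) ∂μ =
      (C / αt) * ∫ x, |N x| * |u x - v x| ∂μ := integral_const_mul _ _
  calc |(∫ x, N x * Sf (u x / αt) ∂μ) - ∫ x, N x * Sf (v x / αt) ∂μ|
      ≤ (C / αt) * ∫ x, |N x| * |u x - v x| ∂μ := by rw [← hconst]; exact hmain
    _ ≤ (C / αt) * ((eLpNorm N 2 μ).toReal * (eLpNorm (u - v) 2 μ).toReal) :=
        mul_le_mul_of_nonneg_left hCS (by positivity)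
    _ = (1 / αt) * (α * D + 2 * β * D ^ 2) * ((R₀ - 1) / (b * R₀ ^ 2)) *
          (eLpNorm N 2 μ).toReal * (eLpNorm (u - v) 2 μ).toReal := by
        rw [hC]; ring
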